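/- For every k ∈ ℕ there exists a constant C > 0 such that for every nondegenerate triangle T ⊂ ℝ² (the convex hull of three affinely independent points p₀, p₁, p₂) and every real polynomial q in two variables of total degree at most k, C⁻¹ ∫_T q² ≤ ∫_T ψ_T q² ≤ ∫_T q², where ψ_T := 27 λ₀ λ₁ λ₂ is the interior (cubic) bubble function of T, λ₀, λ₁, λ₂ being the barycentric coordinate functions of T, and the integrals are taken with respect to two-dimensional Lebesgue measure restricted to T. -/

import Mathlib

open MeasureTheory Set MvPolynomial

namespace Stmt6Aux



noncomputable section

abbrev E2 := EuclideanSpace ℝ (Fin 2)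

/-- reference triangle -/
def Sref : Set E2 := {x | 0 ≤ x 0 ∧ 0 ≤ x 1 ∧ x 0 + x 1 ≤ 1}

def psiref (x : E2) : ℝ := 27 * (1 - x 0 - x 1) * x 0 * x 1

lemma psiref_nonneg {x : E2} (hx : x ∈ Sref) : 0 ≤ psiref x := by
  obtain ⟨h0, h1, h2⟩ := hx
  have : 0 ≤ 1 - x 0 - x 1 := by linarith
  unfold psiref; positivity

lemma psiref_le_one {x : E2} (hx : x ∈ Sref) : psiref x ≤ 1 := by
  obtain ⟨h0, h1, h2⟩ := hx
  have h3 : 0 ≤ 1 - x 0 - x 1 := by linarith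
  unfold psiref
  nlinarith [sq_nonneg (x 0 - x 1), sq_nonneg (x 0 + x 1 - 2*(1 - x 0 - x 1)),
    sq_nonneg (x 0 - (1 - x 0 - x 1)), sq_nonneg (x 1 - (1 - x 0 - x 1)),
    mul_nonneg h0 h1, mul_nonneg h0 h3, mul_nonneg h1 h3]

lemma cont_coord (i : Fin 2) : Continuous fun x : E2 => x i := by
  exact (EuclideanSpace.proj i).continuous

lemma psiref_continuous : Continuous psiref := by
  unfold psiref
  exact ((continuous_const.mul ((continuous_const.sub (cont_coord 0)).sub (cont_coord 1))).mul (cont_coord 0)).mul (cont_coord 1)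

lemma isClosed_Sref : IsClosed Sref := by
  have h0 := cont_coord 0
  have h1 := cont_coord 1
  have : Sref = (fun x : E2 => x 0) ⁻¹' (Ici 0) ∩ ((fun x : E2 => x 1) ⁻¹' (Ici 0)
      ∩ (fun x : E2 => x 0 + x 1) ⁻¹' (Iic 1)) := by
    ext x; simp [Sref, mem_Ici, mem_Iic, and_assoc]
  rw [this]
  exact ((isClosed_Ici.preimage h0).inter ((isClosed_Ici.preimage h1).inter
    (isClosed_Iic.preimage (h0.add h1))))

lemma isCompact_Sref : IsCompact Sref := by
  refine Metric.isCompact_of_isClosed_isBounded isClosed_Sref ?_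
  refine (Metric.isBounded_iff_subset_closedBall 0).2 ⟨2, fun x hx => ?_⟩
  obtain ⟨h0, h1, h2⟩ := hx
  have hx0 : |x 0| ≤ 1 := by rw [abs_le]; constructor <;> linarith
  have hx1 : |x 1| ≤ 1 := by rw [abs_le]; constructor <;> linarith
  have : ‖x‖ ≤ 2 := by
    have := EuclideanSpace.norm_eq x
    rw [this]
    have : ∑ i : Fin 2, ‖x i‖ ^ 2 ≤ 2 := by
      rw [Fin.sum_univ_two]
      have e0 : ‖x 0‖ ^2 ≤ 1 := by rw [Real.norm_eq_abs, sq_abs]; nlinarith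
      have e1 : ‖x 1‖ ^2 ≤ 1 := by rw [Real.norm_eq_abs, sq_abs]; nlinarith
      linarith
    calc Real.sqrt (∑ i : Fin 2, ‖x i‖ ^ 2) ≤ Real.sqrt 4 := by
          apply Real.sqrt_le_sqrt; linarith
      _ = 2 := by
          rw [show (4:ℝ) = 2^2 by norm_num, Real.sqrt_sq]; norm_num
  simpa [Metric.mem_closedBall, dist_zero_right] using this

lemma measurableSet_Sref : MeasurableSet Sref := isClosed_Sref.measurableSet




lemma poly1d {n : ℕ} (c : Fin n → ℝ)
    (h : ∀ x ∈ Set.Ioo (0:ℝ) (1/2), ∑ i, c i * x ^ (i:ℕ) = 0) : ∀ i, c i = 0 := by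
  set P : Polynomial ℝ := ∑ i : Fin n, Polynomial.C (c i) * Polynomial.X ^ (i:ℕ) with hP
  have hP0 : P = 0 := by
    apply Polynomial.eq_zero_of_infinite_isRoot
    apply Set.Infinite.mono (s := Set.Ioo (0:ℝ) (1/2)) ?_ (Set.Ioo_infinite (by norm_num))
    intro x hx
    have : Polynomial.eval x P = ∑ i, c i * x ^ (i:ℕ) := by
      simp [hP, Polynomial.eval_finset_sum]
    simp only [Set.mem_setOf_eq, Polynomial.IsRoot, this]
    exact h x hx
  intro i
  have h2 := congrArg (fun Q => Polynomial.coeff Q (i:ℕ)) hP0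
  simp only [hP, Polynomial.finset_sum_coeff, Polynomial.coeff_C_mul,
    Polynomial.coeff_X_pow, Polynomial.coeff_zero, mul_ite, mul_one, mul_zero] at h2
  rw [Finset.sum_eq_single i (fun b _ hb => by
      simp only [Fin.val_eq_val, ite_eq_right_iff]
      exact fun hh => absurd hh.symm hb) (by simp)] at h2
  simpa using h2

lemma poly2d {n : ℕ} (c : Fin n × Fin n → ℝ)
    (h : ∀ x ∈ Set.Ioo (0:ℝ) (1/2), ∀ y ∈ Set.Ioo (0:ℝ) (1/2),
      ∑ ij : Fin n × Fin n, c ij * x ^ (ij.1:ℕ) * y ^ (ij.2:ℕ) = 0) :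
    ∀ ij, c ij = 0 := by
  intro ij
  have key : ∀ x ∈ Set.Ioo (0:ℝ) (1/2), ∀ j : Fin n, (∑ i : Fin n, c (i, j) * x ^ (i:ℕ)) = 0 := by
    intro x hx
    apply poly1d (fun i : Fin n => ∑ i' : Fin n, c (i', i) * x ^ (i':ℕ))
    intro y hy
    have := h x hx y hy
    rw [Fintype.sum_prod_type_right] at this
    calc (∑ j : Fin n, (∑ i : Fin n, c (i, j) * x ^ (i:ℕ)) * y ^ (j:ℕ))
        = ∑ j : Fin n, ∑ i : Fin n, c (i, j) * x ^ (i:ℕ) * y ^ (j:ℕ) := by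
          refine Finset.sum_congr rfl fun j _ => ?_
          rw [Finset.sum_mul]
      _ = 0 := this
  have := poly1d (fun i : Fin n => c (i, ij.2)) (fun x hx => key x hx ij.2) ij.1
  simpa using this


abbrev Coef (k : ℕ) := Fin (k+1) × Fin (k+1) → ℝ

def mono {k : ℕ} (ij : Fin (k+1) × Fin (k+1)) (x : E2) : ℝ :=
  x 0 ^ (ij.1:ℕ) * x 1 ^ (ij.2:ℕ)

def F {k : ℕ} (c : Coef k) (x : E2) : ℝ := ∑ ij, c ij * mono ij x

lemma mono_continuous {k : ℕ} (ij : Fin (k+1) × Fin (k+1)) : Continuous (mono ij) :=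
  ((cont_coord 0).pow _).mul ((cont_coord 1).pow _)

lemma F_continuous {k : ℕ} (c : Coef k) : Continuous (F c) :=
  continuous_finset_sum _ fun ij _ => continuous_const.mul (mono_continuous ij)

lemma F_smul {k : ℕ} (a : ℝ) (c : Coef k) (x : E2) : F (a • c) x = a * F c x := by
  unfold F
  rw [Finset.mul_sum]
  refine Finset.sum_congr rfl fun ij _ => ?_
  simp [mul_assoc]

def mkE2 (a b : ℝ) : E2 := (WithLp.equiv 2 (Fin 2 → ℝ)).symm ![a, b]

@[simp] lemma mkE2_apply0 (a b : ℝ) : mkE2 a b 0 = a := rfl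
@[simp] lemma mkE2_apply1 (a b : ℝ) : mkE2 a b 1 = b := rfl

/-- the quadratic-form integrals -/
def gInt {k : ℕ} (c : Coef k) : ℝ := ∫ x in Sref, psiref x * (F c x) ^ 2
def fInt {k : ℕ} (c : Coef k) : ℝ := ∫ x in Sref, (F c x) ^ 2

lemma integrableOn_cont {h : E2 → ℝ} (hh : Continuous h) : IntegrableOn h Sref volume :=
  hh.continuousOn.integrableOn_compact isCompact_Sref

lemma fInt_nonneg {k : ℕ} (c : Coef k) : 0 ≤ fInt c :=
  setIntegral_nonneg measurableSet_Sref fun x _ => sq_nonneg _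

lemma gInt_nonneg {k : ℕ} (c : Coef k) : 0 ≤ gInt c :=
  setIntegral_nonneg measurableSet_Sref fun x hx =>
    mul_nonneg (psiref_nonneg hx) (sq_nonneg _)

lemma gInt_le_fInt {k : ℕ} (c : Coef k) : gInt c ≤ fInt c := by
  refine setIntegral_mono_on ?_ ?_ measurableSet_Sref fun x hx => ?_
  · exact integrableOn_cont (psiref_continuous.mul ((F_continuous c).pow 2))
  · exact integrableOn_cont ((F_continuous c).pow 2)
  · calc psiref x * F c x ^ 2 ≤ 1 * F c x ^ 2 :=
        mul_le_mul_of_nonneg_right (psiref_le_one hx) (sq_nonneg _)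
      _ = F c x ^ 2 := one_mul _

lemma gInt_smul {k : ℕ} (a : ℝ) (c : Coef k) : gInt (a • c) = a ^ 2 * gInt c := by
  unfold gInt
  rw [← integral_const_mul]
  refine setIntegral_congr_fun measurableSet_Sref fun x _ => ?_
  rw [F_smul]; ring

lemma fInt_smul {k : ℕ} (a : ℝ) (c : Coef k) : fInt (a • c) = a ^ 2 * fInt c := by
  unfold fInt
  rw [← integral_const_mul]
  refine setIntegral_congr_fun measurableSet_Sref fun x _ => ?_
  rw [F_smul]; ring

/-- quadratic form expansion of gInt, fInt, for continuity -/
lemma gInt_eq {k : ℕ} (c : Coef k) :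
    gInt c = ∑ ij, ∑ kl, c ij * c kl *
      ∫ x in Sref, psiref x * (mono ij x * mono kl x) := by
  unfold gInt
  have hexp : ∀ x : E2, psiref x * (F c x) ^ 2
      = ∑ ij, ∑ kl, c ij * c kl * (psiref x * (mono ij x * mono kl x)) := by
    intro x
    rw [sq, F, Finset.sum_mul_sum]
    rw [Finset.mul_sum]
    refine Finset.sum_congr rfl fun ij _ => ?_
    rw [Finset.mul_sum]
    refine Finset.sum_congr rfl fun kl _ => ?_
    ring
  simp_rw [hexp]
  rw [integral_finset_sum]
  · refine Finset.sum_congr rfl fun ij _ => ?_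
    rw [integral_finset_sum]
    · refine Finset.sum_congr rfl fun kl _ => ?_
      exact integral_const_mul _ _
    · intro kl _
      exact (integrableOn_cont ((psiref_continuous.mul
        ((mono_continuous ij).mul (mono_continuous kl))))).const_mul _
  · intro ij _
    refine integrable_finset_sum _ fun kl _ => ?_
    exact (integrableOn_cont ((psiref_continuous.mul
      ((mono_continuous ij).mul (mono_continuous kl))))).const_mul _

lemma fInt_eq {k : ℕ} (c : Coef k) :
    fInt c = ∑ ij, ∑ kl, c ij * c kl *
      ∫ x in Sref, mono ij x * mono kl x := by
  unfold fInt
  have hexp : ∀ x : E2, (F c x) ^ 2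
      = ∑ ij, ∑ kl, c ij * c kl * (mono ij x * mono kl x) := by
    intro x
    rw [sq, F, Finset.sum_mul_sum]
    refine Finset.sum_congr rfl fun ij _ => ?_
    refine Finset.sum_congr rfl fun kl _ => ?_
    ring
  simp_rw [hexp]
  rw [integral_finset_sum]
  · refine Finset.sum_congr rfl fun ij _ => ?_
    rw [integral_finset_sum]
    · refine Finset.sum_congr rfl fun kl _ => ?_
      exact integral_const_mul _ _
    · intro kl _
      exact (integrableOn_cont ((mono_continuous ij).mul (mono_continuous kl))).const_mul _
  · intro ij _
    refine integrable_finset_sum _ fun kl _ => ?_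
    exact (integrableOn_cont ((mono_continuous ij).mul (mono_continuous kl))).const_mul _

lemma gInt_continuous {k : ℕ} : Continuous (gInt (k := k)) := by
  have : gInt (k := k) = fun c => ∑ ij, ∑ kl, c ij * c kl *
      ∫ x in Sref, psiref x * (mono ij x * mono kl x) := funext gInt_eq
  rw [this]
  refine continuous_finset_sum _ fun ij _ => continuous_finset_sum _ fun kl _ => ?_
  exact ((continuous_apply ij).mul (continuous_apply kl)).mul continuous_const

lemma fInt_continuous {k : ℕ} : Continuous (fInt (k := k)) := by
  have : fInt (k := k) = fun c => ∑ ij, ∑ kl, c ij * c kl *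
      ∫ x in Sref, mono ij x * mono kl x := funext fInt_eq
  rw [this]
  refine continuous_finset_sum _ fun ij _ => continuous_finset_sum _ fun kl _ => ?_
  exact ((continuous_apply ij).mul (continuous_apply kl)).mul continuous_const

def Oref : Set E2 := {x | 0 < x 0 ∧ 0 < x 1 ∧ x 0 + x 1 < 1}

lemma isOpen_Oref : IsOpen Oref := by
  have h0 := cont_coord 0; have h1 := cont_coord 1
  have : Oref = (fun x : E2 => x 0) ⁻¹' (Ioi 0) ∩ ((fun x : E2 => x 1) ⁻¹' (Ioi 0)
      ∩ (fun x : E2 => x 0 + x 1) ⁻¹' (Iio 1)) := by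
    ext x; simp [Oref, and_assoc]
  rw [this]
  exact (isOpen_Ioi.preimage h0).inter ((isOpen_Ioi.preimage h1).inter
    (isOpen_Iio.preimage (h0.add h1)))

lemma Oref_subset : Oref ⊆ Sref := fun x hx => ⟨le_of_lt hx.1, le_of_lt hx.2.1, le_of_lt hx.2.2⟩

lemma psiref_pos {x : E2} (hx : x ∈ Oref) : 0 < psiref x := by
  obtain ⟨h0, h1, h2⟩ := hx
  have h3 : 0 < 1 - x 0 - x 1 := by linarith
  unfold psiref; positivity

lemma exists_ne_zero {k : ℕ} (c : Coef k) (hc : c ≠ 0) : ∃ x ∈ Oref, F c x ≠ 0 := by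
  by_contra h
  push_neg at h
  apply hc
  funext ij
  refine poly2d c (fun x hx y hy => ?_) ij
  have hmem : mkE2 x y ∈ Oref := by
    obtain ⟨hx1, hx2⟩ := hx; obtain ⟨hy1, hy2⟩ := hy
    refine ⟨by simpa using hx1, by simpa using hy1, ?_⟩
    simp only [mkE2_apply0, mkE2_apply1]
    linarith
  have h0 := h _ hmem
  rw [F] at h0
  rw [← h0]
  refine Finset.sum_congr rfl fun kl _ => ?_
  simp [mono, mul_assoc]

lemma gInt_pos {k : ℕ} (c : Coef k) (hc : c ≠ 0) : 0 < gInt c := by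
  have hnn : 0 ≤ᵐ[volume.restrict Sref] fun x => psiref x * F c x ^ 2 :=
    (ae_restrict_iff' measurableSet_Sref).2 (ae_of_all _ fun x hx =>
      mul_nonneg (psiref_nonneg hx) (sq_nonneg _))
  have hint : IntegrableOn (fun x => psiref x * F c x ^ 2) Sref :=
    integrableOn_cont (psiref_continuous.mul ((F_continuous c).pow 2))
  rw [gInt, setIntegral_pos_iff_support_of_nonneg_ae hnn hint]
  obtain ⟨x₀, hx₀O, hx₀F⟩ := exists_ne_zero c hc
  have hVopen : IsOpen (Oref ∩ {x | F c x ≠ 0}) :=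
    isOpen_Oref.inter (isOpen_compl_iff.2 ((isClosed_singleton).preimage (F_continuous c)))
  have hVsub : Oref ∩ {x | F c x ≠ 0}
      ⊆ Function.support (fun x => psiref x * F c x ^ 2) ∩ Sref := by
    rintro x ⟨hxO, hxF⟩
    exact ⟨mul_ne_zero (ne_of_gt (psiref_pos hxO)) (pow_ne_zero _ hxF), Oref_subset hxO⟩
  calc (0:ENNReal) < volume (Oref ∩ {x | F c x ≠ 0}) :=
        hVopen.measure_pos volume ⟨x₀, hx₀O, hx₀F⟩
    _ ≤ _ := measure_mono hVsub

lemma claimA (k : ℕ) : ∃ c0 : ℝ, 0 < c0 ∧ ∀ c : Coef k, c0 * fInt c ≤ gInt c := by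
  have hS : IsCompact (Metric.sphere (0 : Coef k) 1) := isCompact_sphere 0 1
  have hSne : (Metric.sphere (0 : Coef k) 1).Nonempty :=
    NormedSpace.sphere_nonempty.mpr zero_le_one
  obtain ⟨cmin, hcminS, hmin⟩ := hS.exists_isMinOn hSne gInt_continuous.continuousOn
  obtain ⟨cmax, hcmaxS, hmax⟩ := hS.exists_isMaxOn hSne fInt_continuous.continuousOn
  have hcmin0 : cmin ≠ 0 := by
    intro h0
    rw [mem_sphere_zero_iff_norm, h0, norm_zero] at hcminS
    norm_num at hcminS
  have hgpos : 0 < gInt cmin := gInt_pos cmin hcmin0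
  set M := fInt cmax with hMdef
  have hM0 : 0 ≤ M := fInt_nonneg cmax
  refine ⟨gInt cmin / (M + 1), by positivity, fun c => ?_⟩
  by_cases hc : c = 0
  · have hF0 : ∀ x : E2, F c x = 0 := by intro x; simp [hc, F]
    have hf0 : fInt c = 0 := by
      rw [fInt]; simp [hF0]
    have hg0 : gInt c = 0 := by
      rw [gInt]; simp [hF0]
    rw [hf0, hg0, mul_zero]
  · have hn : ‖c‖ ≠ 0 := norm_ne_zero_iff.2 hc
    have hnpos : (0:ℝ) < ‖c‖ := norm_pos_iff.2 hc
    set u := ‖c‖⁻¹ • c with hu_def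
    have hu : u ∈ Metric.sphere (0 : Coef k) 1 := by
      rw [mem_sphere_zero_iff_norm, hu_def, norm_smul, norm_inv, norm_norm,
        inv_mul_cancel₀ hn]
    have h1 : gInt cmin ≤ gInt u := hmin hu
    have h2 : fInt u ≤ M := hmax hu
    have hgu : gInt u = ‖c‖⁻¹ ^ 2 * gInt c := gInt_smul _ _
    have hfu : fInt u = ‖c‖⁻¹ ^ 2 * fInt c := fInt_smul _ _
    rw [hgu] at h1
    rw [hfu] at h2
    have hpos : 0 < ‖c‖⁻¹ ^ 2 := by positivity
    rw [div_mul_eq_mul_div, div_le_iff₀ (by positivity)]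
    nlinarith [mul_le_mul_of_nonneg_left h2 hgpos.le,
      mul_le_mul_of_nonneg_right h1 (by linarith : (0:ℝ) ≤ M + 1),
      fInt_nonneg c, gInt_nonneg c, mul_pos hpos hgpos]


lemma coord_le_degsum (d : Fin 2 →₀ ℕ) (i : Fin 2) : d i ≤ d.sum fun _ e => e := by
  by_cases h : d i = 0
  · simp [h]
  · exact Finset.single_le_sum (f := fun j => d j) (fun _ _ => Nat.zero_le _)
      (Finsupp.mem_support_iff.2 h)

def emb (k : ℕ) (ij : Fin (k+1) × Fin (k+1)) : Fin 2 →₀ ℕ :=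
  Finsupp.single 0 (ij.1:ℕ) + Finsupp.single 1 (ij.2:ℕ)

lemma emb_apply0 {k : ℕ} (ij : Fin (k+1) × Fin (k+1)) : emb k ij 0 = (ij.1:ℕ) := by
  simp [emb, Finsupp.single_apply]

lemma emb_apply1 {k : ℕ} (ij : Fin (k+1) × Fin (k+1)) : emb k ij 1 = (ij.2:ℕ) := by
  simp [emb, Finsupp.single_apply]

lemma emb_inj {k : ℕ} : Function.Injective (emb k) := by
  intro a b hab
  have h0 := congrArg (fun d : Fin 2 →₀ ℕ => d 0) hab
  have h1 := congrArg (fun d : Fin 2 →₀ ℕ => d 1) hab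
  simp only [emb_apply0, emb_apply1] at h0 h1
  exact Prod.ext (Fin.val_injective h0) (Fin.val_injective h1)

/-- representation of a low-degree polynomial in the coefficient space -/
lemma rep_lemma {k : ℕ} (q : MvPolynomial (Fin 2) ℝ) (hq : q.totalDegree ≤ k) :
    ∃ c : Coef k, ∀ x : E2, MvPolynomial.eval (fun i => x i) q = F c x := by
  classical
  refine ⟨fun ij => q.coeff (emb k ij), fun x => ?_⟩
  rw [eval_eq']
  have hsub : q.support ⊆ Finset.image (emb k) Finset.univ := by
    intro d hd
    have hds : (d.sum fun _ e => e) ≤ k := le_trans (le_totalDegree hd) hq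
    have h0 : d 0 ≤ k := le_trans (coord_le_degsum d 0) hds
    have h1 : d 1 ≤ k := le_trans (coord_le_degsum d 1) hds
    refine Finset.mem_image.2 ⟨(⟨d 0, Nat.lt_succ_of_le h0⟩, ⟨d 1, Nat.lt_succ_of_le h1⟩),
      Finset.mem_univ _, ?_⟩
    ext i
    fin_cases i
    · simp [emb_apply0]
    · simp [emb_apply1]
  rw [Finset.sum_subset hsub (fun d _ hd => by
    rw [MvPolynomial.notMem_support_iff.1 hd, zero_mul])]
  rw [Finset.sum_image (fun a _ b _ hab => emb_inj hab)]
  unfold F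
  refine Finset.sum_congr rfl fun ij _ => ?_
  congr 1
  rw [Fin.prod_univ_two, emb_apply0, emb_apply1, mono]

/-- substitution polynomials for the affine map -/
def subst (w v₁ v₂ : E2) (i : Fin 2) : MvPolynomial (Fin 2) ℝ :=
  C (w i) + C (v₁ i) * X 0 + C (v₂ i) * X 1

lemma totalDegree_subst (w v₁ v₂ : E2) (i : Fin 2) :
    (subst w v₁ v₂ i).totalDegree ≤ 1 := by
  unfold subst
  refine le_trans (totalDegree_add _ _) (max_le (le_trans (totalDegree_add _ _)
    (max_le ?_ ?_)) ?_)
  · simp [totalDegree_C]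
  · exact le_trans (totalDegree_mul _ _) (by simp [totalDegree_C, totalDegree_X])
  · exact le_trans (totalDegree_mul _ _) (by simp [totalDegree_C, totalDegree_X])

def qcomp (w v₁ v₂ : E2) (q : MvPolynomial (Fin 2) ℝ) : MvPolynomial (Fin 2) ℝ :=
  eval₂ C (subst w v₁ v₂) q

lemma totalDegree_qcomp {k : ℕ} (w v₁ v₂ : E2) (q : MvPolynomial (Fin 2) ℝ)
    (hq : q.totalDegree ≤ k) : (qcomp w v₁ v₂ q).totalDegree ≤ k := by
  unfold qcomp
  rw [eval₂_eq']
  refine le_trans (totalDegree_finset_sum _ _) (Finset.sup_le fun d hd => ?_)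
  refine le_trans (totalDegree_mul _ _) ?_
  rw [totalDegree_C, zero_add]
  refine le_trans (totalDegree_finset_prod _ _) ?_
  have : ∀ i : Fin 2, ((subst w v₁ v₂ i) ^ d i).totalDegree ≤ d i := fun i =>
    le_trans (totalDegree_pow _ _) (le_trans
      (Nat.mul_le_mul_left _ (totalDegree_subst w v₁ v₂ i)) (le_of_eq (mul_one _)))
  refine le_trans (Finset.sum_le_sum fun i _ => this i) ?_
  have hsum : ∑ i : Fin 2, d i = d.sum fun _ e => e := by
    rw [Finsupp.sum_fintype]
    intro; rfl
  rw [hsum]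
  exact le_trans (le_totalDegree hd) hq

lemma eval_qcomp (w v₁ v₂ : E2) (q : MvPolynomial (Fin 2) ℝ) (x : E2) :
    MvPolynomial.eval (fun i => x i) (qcomp w v₁ v₂ q)
      = MvPolynomial.eval (fun i => w i + x 0 * v₁ i + x 1 * v₂ i) q := by
  unfold qcomp
  rw [eval_eval₂]
  have hid : ((MvPolynomial.eval (fun i : Fin 2 => x i)).comp (C (σ := Fin 2) (R := ℝ)))
      = RingHom.id ℝ := by
    refine RingHom.ext fun r => ?_
    simp
  rw [hid, eval₂_id]
  have hfun : (fun s => MvPolynomial.eval (fun i : Fin 2 => x i) (subst w v₁ v₂ s))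
      = fun i => w i + x 0 * v₁ i + x 1 * v₂ i := by
    funext i
    simp [subst]
    ring
  rw [hfun]

def Mlin (v₁ v₂ : E2) : E2 →ₗ[ℝ] E2 where
  toFun x := x 0 • v₁ + x 1 • v₂
  map_add' x y := by
    simp only [PiLp.add_apply, add_smul]
    abel
  map_smul' a x := by
    simp only [PiLp.smul_apply, smul_eq_mul, RingHom.id_apply, smul_add, smul_smul]

@[simp] lemma Mlin_apply (v₁ v₂ x : E2) : Mlin v₁ v₂ x = x 0 • v₁ + x 1 • v₂ := rfl

lemma convex_Sref : Convex ℝ Sref := by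
  intro x hx y hy a b ha hb hab
  obtain ⟨hx0, hx1, hx2⟩ := hx
  obtain ⟨hy0, hy1, hy2⟩ := hy
  refine ⟨?_, ?_, ?_⟩ <;>
    simp only [PiLp.add_apply, PiLp.smul_apply, smul_eq_mul] <;> nlinarith

lemma affine_key (f : E2 →ᵃ[ℝ] ℝ) (w v₁ v₂ : E2) (x : E2) :
    f (w + Mlin v₁ v₂ x) = f w + x 0 * (f (w + v₁) - f w) + x 1 * (f (w + v₂) - f w) := by
  have hlin : ∀ v : E2, f.linear v = f (w + v) - f w := by
    intro v
    have := f.map_vadd w v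
    rw [vadd_eq_add, vadd_eq_add] at this
    rw [add_comm w v, this]
    ring
  have h1 : f (w + Mlin v₁ v₂ x) = f.linear (Mlin v₁ v₂ x) + f w := by
    have := f.map_vadd w (Mlin v₁ v₂ x)
    rw [vadd_eq_add, vadd_eq_add] at this
    rw [add_comm w _, this]
  rw [h1, Mlin_apply, map_add, LinearMap.map_smul, LinearMap.map_smul, smul_eq_mul, smul_eq_mul,
    hlin, hlin]
  ring

end

end Stmt6Aux

open MeasureTheory

/-- Lemma 3.1 (interior bubble functions), first estimate, triangle form:
for every degree `k` there is `C > 0` such that for every nondegenerate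
triangle `T = conv{p₀, p₁, p₂} ⊆ ℝ²` with barycentric coordinates `lam i`
and every bivariate polynomial `q` of total degree at most `k`,
`C⁻¹ ∫_T q² ≤ ∫_T ψ_T q² ≤ ∫_T q²`, where `ψ_T = 27 λ₀ λ₁ λ₂`. -/
theorem stmt_6 (k : ℕ) :
    ∃ C : ℝ, 0 < C ∧
      ∀ p : Fin 3 → EuclideanSpace ℝ (Fin 2),
        AffineIndependent ℝ p →
        ∀ lam : Fin 3 → (EuclideanSpace ℝ (Fin 2) →ᵃ[ℝ] ℝ),
          (∀ i j, lam i (p j) = if i = j then 1 else 0) →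
          ∀ q : MvPolynomial (Fin 2) ℝ, q.totalDegree ≤ k →
            (C⁻¹ * ∫ x in convexHull ℝ (Set.range p),
                (MvPolynomial.eval (fun i => x i) q) ^ 2
              ≤ ∫ x in convexHull ℝ (Set.range p),
                  (27 * lam 0 x * lam 1 x * lam 2 x)
                    * (MvPolynomial.eval (fun i => x i) q) ^ 2)
            ∧ (∫ x in convexHull ℝ (Set.range p),
                  (27 * lam 0 x * lam 1 x * lam 2 x)
                    * (MvPolynomial.eval (fun i => x i) q) ^ 2
              ≤ ∫ x in convexHull ℝ (Set.range p),
                  (MvPolynomial.eval (fun i => x i) q) ^ 2) := by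
  classical
  open Stmt6Aux in
  obtain ⟨c0, hc0, hclaim⟩ := Stmt6Aux.claimA k
  refine ⟨c0⁻¹, by positivity, fun p _hp lam hlam q hq => ?_⟩
  set w : Stmt6Aux.E2 := p 0 with hw
  set v₁ : Stmt6Aux.E2 := p 1 - p 0 with hv₁
  set v₂ : Stmt6Aux.E2 := p 2 - p 0 with hv₂
  set A : Stmt6Aux.E2 → Stmt6Aux.E2 := fun x => w + Stmt6Aux.Mlin v₁ v₂ x with hA
  set Mc : Stmt6Aux.E2 →L[ℝ] Stmt6Aux.E2 :=
    LinearMap.toContinuousLinearMap (Stmt6Aux.Mlin v₁ v₂) with hMc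
  have hMcoe : ∀ x, Mc x = Stmt6Aux.Mlin v₁ v₂ x := fun x => rfl
  -- derivative
  have hder : ∀ x ∈ Stmt6Aux.Sref, HasFDerivWithinAt A Mc Stmt6Aux.Sref x := by
    intro x _
    have h1 : HasFDerivAt (fun y => w + Mc y) Mc x := (Mc.hasFDerivAt).const_add w
    have h2 : (fun y => w + Mc y) = A := by
      funext y; rw [hA]; rfl
    rw [h2] at h1
    exact h1.hasFDerivWithinAt
  -- barycentric coordinates along A
  have hwv₁ : w + v₁ = p 1 := by rw [hw, hv₁]; abel
  have hwv₂ : w + v₂ = p 2 := by rw [hw, hv₂]; abel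
  have hval0 : ∀ i j : Fin 3, i ≠ j → lam i (p j) = 0 := fun i j hij => by
    rw [hlam]; exact if_neg hij
  have hval1 : ∀ i : Fin 3, lam i (p i) = 1 := fun i => by
    rw [hlam]; exact if_pos rfl
  have hkey : ∀ (i : Fin 3) (x : Stmt6Aux.E2), lam i (A x)
      = lam i (p 0) + x 0 * (lam i (p 1) - lam i (p 0))
        + x 1 * (lam i (p 2) - lam i (p 0)) := by
    intro i x
    rw [hA]
    rw [Stmt6Aux.affine_key (lam i) w v₁ v₂ x, hwv₁, hwv₂, hw]
  have hlam0 : ∀ x : Stmt6Aux.E2, lam 0 (A x) = 1 - x 0 - x 1 := by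
    intro x
    rw [hkey 0 x, hval1 0, hval0 0 1 (by decide), hval0 0 2 (by decide)]
    ring
  have hlam1 : ∀ x : Stmt6Aux.E2, lam 1 (A x) = x 0 := by
    intro x
    rw [hkey 1 x, hval1 1, hval0 1 0 (by decide), hval0 1 2 (by decide)]
    ring
  have hlam2 : ∀ x : Stmt6Aux.E2, lam 2 (A x) = x 1 := by
    intro x
    rw [hkey 2 x, hval1 2, hval0 2 0 (by decide), hval0 2 1 (by decide)]
    ring
  have hpsi : ∀ x : Stmt6Aux.E2, 27 * lam 0 (A x) * lam 1 (A x) * lam 2 (A x)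
      = Stmt6Aux.psiref x := by
    intro x
    rw [hlam0, hlam1, hlam2, Stmt6Aux.psiref]
  -- injectivity
  have hinj : Set.InjOn A Stmt6Aux.Sref := by
    intro x _ y _ hxy
    have h0 : x 0 = y 0 := by rw [← hlam1 x, ← hlam1 y, hxy]
    have h1 : x 1 = y 1 := by rw [← hlam2 x, ← hlam2 y, hxy]
    ext i
    fin_cases i
    · exact h0
    · exact h1
  -- vertices
  have hA00 : A (Stmt6Aux.mkE2 0 0) = p 0 := by
    rw [hA]; simp [hw]
  have hA10 : A (Stmt6Aux.mkE2 1 0) = p 1 := by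
    rw [hA]; simp [hwv₁]
  have hA01 : A (Stmt6Aux.mkE2 0 1) = p 2 := by
    rw [hA]; simp [hwv₂]
  -- image
  have himg : A '' Stmt6Aux.Sref = convexHull ℝ (Set.range p) := by
    apply Set.Subset.antisymm
    · rintro _ ⟨x, hx, rfl⟩
      obtain ⟨hx0, hx1, hx2⟩ := hx
      have hsum1 : ∑ i, (![1 - x 0 - x 1, x 0, x 1] : Fin 3 → ℝ) i = 1 := by
        simp [Fin.sum_univ_three]
        ring
      have hcomb : A x = Finset.univ.centerMass ![1 - x 0 - x 1, x 0, x 1] p := by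
        rw [Finset.centerMass_eq_of_sum_1 _ _ hsum1, Fin.sum_univ_three]
        show w + Stmt6Aux.Mlin v₁ v₂ x = _
        rw [Stmt6Aux.Mlin_apply, hw, hv₁, hv₂]
        simp only [Matrix.cons_val_zero, Matrix.cons_val_one, Matrix.head_cons,
          Matrix.cons_val_two, Matrix.tail_cons]
        module
      rw [hcomb]
      refine Finset.centerMass_mem_convexHull _ ?_ ?_ ?_
      · intro i _
        fin_cases i <;> simp <;> linarith
      · rw [hsum1]; norm_num
      · intro i _
        exact Set.mem_range_self i
    · apply convexHull_min
      · rintro _ ⟨i, rfl⟩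
        fin_cases i
        · exact ⟨Stmt6Aux.mkE2 0 0, ⟨by norm_num, by norm_num, by norm_num⟩, hA00⟩
        · exact ⟨Stmt6Aux.mkE2 1 0, ⟨by norm_num, by norm_num, by norm_num⟩, hA10⟩
        · exact ⟨Stmt6Aux.mkE2 0 1, ⟨by norm_num, by norm_num, by norm_num⟩, hA01⟩
      · have himg2 : A '' Stmt6Aux.Sref
            = (fun z => w + z) '' (Stmt6Aux.Mlin v₁ v₂ '' Stmt6Aux.Sref) := by
          rw [Set.image_image]
        rw [himg2]
        exact (Stmt6Aux.convex_Sref.linear_image (Stmt6Aux.Mlin v₁ v₂)).translate w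
  -- change of variables
  have hcov : ∀ h : Stmt6Aux.E2 → ℝ,
      ∫ x in convexHull ℝ (Set.range p), h x = |Mc.det| * ∫ x in Stmt6Aux.Sref, h (A x) := by
    intro h
    rw [← himg,
      integral_image_eq_integral_abs_det_fderiv_smul volume Stmt6Aux.measurableSet_Sref
        hder hinj h]
    simp_rw [smul_eq_mul]
    exact integral_const_mul _ _
  -- polynomial composition
  obtain ⟨c, hc⟩ := Stmt6Aux.rep_lemma (Stmt6Aux.qcomp w v₁ v₂ q)
    (Stmt6Aux.totalDegree_qcomp w v₁ v₂ q hq)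
  have hqA : ∀ x : Stmt6Aux.E2,
      MvPolynomial.eval (fun i => (A x) i) q = Stmt6Aux.F c x := by
    intro x
    have hAxi : (fun i => (A x) i) = fun i => w i + x 0 * v₁ i + x 1 * v₂ i := by
      funext i
      show (w + Stmt6Aux.Mlin v₁ v₂ x) i = _
      simp only [Stmt6Aux.Mlin_apply, PiLp.add_apply, PiLp.smul_apply, smul_eq_mul]
      ring
    rw [← hc x, Stmt6Aux.eval_qcomp, hAxi]
  have e1 : ∫ x in convexHull ℝ (Set.range p), (MvPolynomial.eval (fun i => x i) q) ^ 2
      = |Mc.det| * Stmt6Aux.fInt c := by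
    rw [hcov]
    congr 1
    refine setIntegral_congr_fun Stmt6Aux.measurableSet_Sref fun x _ => ?_
    rw [hqA]
  have e2 : ∫ x in convexHull ℝ (Set.range p),
        (27 * lam 0 x * lam 1 x * lam 2 x) * (MvPolynomial.eval (fun i => x i) q) ^ 2
      = |Mc.det| * Stmt6Aux.gInt c := by
    rw [hcov]
    congr 1
    refine setIntegral_congr_fun Stmt6Aux.measurableSet_Sref fun x _ => ?_
    rw [hpsi, hqA]
  constructor
  · rw [e1, e2, inv_inv]
    calc c0 * (|Mc.det| * Stmt6Aux.fInt c) = |Mc.det| * (c0 * Stmt6Aux.fInt c) := by ring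
      _ ≤ |Mc.det| * Stmt6Aux.gInt c :=
        mul_le_mul_of_nonneg_left (hclaim c) (abs_nonneg _)
  · rw [e1, e2]
    exact mul_le_mul_of_nonneg_left (Stmt6Aux.gInt_le_fInt c) (abs_nonneg _)
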